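/- arXiv:1410.2961 — 2 statements merged into one kernel-verified Lean document; each statement's English description precedes it below -/
import Mathlib

section
/- Among all Borel probability measures π on [0,1] satisfying ∫ θ dπ(θ) = 1/2 and ∫ θ² dπ(θ) = 2/5, the integral ∫ S(θ) dπ(θ) attains its minimum value (2/5)·log 2 uniquely at the discrete measure π_LI = (3/10)·δ_{0} + (3/10)·δ_{1} + (2/5)·δ_{1/2}, where δ_t denotes the Dirac measure at t. That is, for every such π, ∫ S(θ) dπ(θ) ≥ (2/5)·log 2, with equality if and only if π = π_LI. -/
open MeasureTheory
open scoped ENNReal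


/-- cubic upper bound on log(1+x), strict off 0 -/
lemma log_one_add_lt_cubic {x : ℝ} (hx : -1 < x) (hx0 : x ≠ 0) :
    Real.log (1 + x) < x - x ^ 2 / 2 + x ^ 3 / 3 := by
  set f : ℝ → ℝ := fun y => y - y ^ 2 / 2 + y ^ 3 / 3 - Real.log (1 + y) with hf
  have hderiv : ∀ y : ℝ, -1 < y → HasDerivAt f (y ^ 3 / (1 + y)) y := by
    intro y hy
    have h1 : (1 : ℝ) + y ≠ 0 := by linarith
    have hlog : HasDerivAt (fun y : ℝ => Real.log (1 + y)) (1 / (1 + y)) y := by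
      have := (Real.hasDerivAt_log h1).comp y ((hasDerivAt_id y).const_add 1)
      simpa [one_div, Function.comp_def] using this
    have hp : HasDerivAt (fun y : ℝ => y - y ^ 2 / 2 + y ^ 3 / 3)
        (1 - 2 * y / 2 + 3 * y ^ 2 / 3) y := by
      have h1 := hasDerivAt_id y
      have h2 := ((hasDerivAt_pow 2 y).div_const 2)
      have h3 := ((hasDerivAt_pow 3 y).div_const 3)
      simpa [Pi.add_def, Pi.sub_def] using (h1.sub h2).add h3
    have : HasDerivAt f (1 - 2 * y / 2 + 3 * y ^ 2 / 3 - 1 / (1 + y)) y := hp.sub hlog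
    convert this using 1
    field_simp
    ring
  have hcont : ∀ y ∈ Set.Ioi (-1 : ℝ), ContinuousAt f y := fun y hy =>
    ((hderiv y hy).differentiableAt).continuousAt
  have hf0 : f 0 = 0 := by simp [hf]
  have key : 0 < f x := by
    rcases lt_or_gt_of_ne hx0 with hneg | hpos
    · -- x < 0 : f strictly anti on Ioc (-1) 0? use strictAntiOn on (Ioo (-1) 1)? simpler: Icc x 0 ⊆ Ioi (-1)
      have hanti : StrictAntiOn f (Set.Ioc (-1 : ℝ) 0) := by
        apply strictAntiOn_of_deriv_neg (convex_Ioc _ _)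
        · intro y hy
          exact (hcont y (by exact hy.1)).continuousWithinAt
        · intro y hy
          rw [interior_Ioc] at hy
          rw [(hderiv y hy.1).deriv]
          have h1 : (0:ℝ) < 1 + y := by linarith [hy.1]
          have hy2 : (0:ℝ) < y ^ 2 := by nlinarith [mul_pos (neg_pos.mpr hy.2) (neg_pos.mpr hy.2)]
          have : y ^ 3 < 0 := by nlinarith [hy.2]
          exact div_neg_of_neg_of_pos this h1
      have := hanti (Set.mem_Ioc.mpr ⟨hx, le_of_lt hneg⟩) (Set.mem_Ioc.mpr ⟨by norm_num, le_refl 0⟩) hneg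
      rwa [hf0] at this
    · have hmono : StrictMonoOn f (Set.Ici (0 : ℝ)) := by
        apply strictMonoOn_of_deriv_pos (convex_Ici _)
        · intro y hy
          exact (hcont y (by simp at hy ⊢; linarith)).continuousWithinAt
        · intro y hy
          rw [interior_Ici] at hy
          rw [(hderiv y (by simp at hy; linarith)).deriv]
          have hy' : (0:ℝ) < y := hy
          have h1 : (0:ℝ) < 1 + y := by linarith
          exact div_pos (by positivity) h1
      have := hmono (Set.mem_Ici.mpr le_rfl) (Set.mem_Ici.mpr (le_of_lt hpos)) hpos
      rwa [hf0] at this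
  simp only [hf] at key
  linarith


/-- The binary entropy function `S(θ) = −θ log θ − (1−θ) log(1−θ)`
(with the convention `0 · log 0 = 0`, which holds automatically since `Real.log 0 = 0`). -/
noncomputable def binEnt (θ : ℝ) : ℝ := -θ * Real.log θ - (1 - θ) * Real.log (1 - θ)

lemma binEnt_symm (θ : ℝ) : binEnt (1 - θ) = binEnt θ := by
  simp only [binEnt]; ring_nf

lemma binEnt_zero : binEnt 0 = 0 := by simp [binEnt]
lemma binEnt_one : binEnt 1 = 0 := by simp [binEnt]
lemma binEnt_half : binEnt (1/2) = Real.log 2 := by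
  have : Real.log (1/2) = -Real.log 2 := by
    rw [one_div, Real.log_inv]
  simp only [binEnt]
  rw [show (1:ℝ) - 1/2 = 1/2 by norm_num, this]
  ring

lemma key_numeric : 4 * Real.log 2 - 1 < Real.log 6 := by
  have h16 : (4:ℝ) * Real.log 2 = Real.log 6 + Real.log (8/3) := by
    rw [← Real.log_mul (by norm_num) (by norm_num)]
    rw [show (6:ℝ) * (8/3) = 2 ^ 4 by norm_num, Real.log_pow]
    norm_num
  have h83 : Real.log (8/3) < 1 := by
    rw [Real.log_lt_iff_lt_exp (by norm_num)]
    have := Real.exp_one_gt_d9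
    linarith
  linarith

lemma regionA {θ : ℝ} (h0 : 0 < θ) (h6 : θ ≤ 1/6) :
    4 * Real.log 2 * (θ * (1 - θ)) < binEnt θ := by
  have h1θ : (0:ℝ) < 1 - θ := by linarith
  have hlogθ : Real.log θ ≤ -Real.log 6 := by
    have := Real.log_le_log h0 h6
    rwa [one_div, Real.log_inv] at this
  have hlog1θ : Real.log (1 - θ) ≤ -θ := by
    have := Real.log_le_sub_one_of_pos h1θ
    linarith
  have hbe : θ * Real.log 6 + (1 - θ) * θ ≤ binEnt θ := by
    simp only [binEnt]
    nlinarith [mul_le_mul_of_nonneg_left hlogθ h0.le,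
      mul_le_mul_of_nonneg_left hlog1θ h1θ.le]
  have hkey := key_numeric
  have hL : (0.6931471803:ℝ) < Real.log 2 := Real.log_two_gt_d9
  nlinarith [mul_pos h0 (show (0:ℝ) < Real.log 6 - (4 * Real.log 2 - 1) * (1 - θ) by nlinarith)]

lemma regionB {θ : ℝ} (h1 : 1/6 ≤ θ) (h2 : θ ≤ 5/6) (hne : θ ≠ 1/2) :
    4 * Real.log 2 * (θ * (1 - θ)) < binEnt θ := by
  set u : ℝ := 2 * θ - 1 with hu
  have hu0 : u ≠ 0 := by
    intro h; apply hne; rw [hu] at h; linarith [h]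
  have h1u : (0:ℝ) < 1 + u := by simp [hu]; linarith
  have h1u' : (0:ℝ) < 1 - u := by simp [hu]; linarith
  have hc1 : Real.log (1 + u) < u - u ^ 2 / 2 + u ^ 3 / 3 :=
    log_one_add_lt_cubic (by linarith) hu0
  have hc2 : Real.log (1 - u) < -u - u ^ 2 / 2 - u ^ 3 / 3 := by
    have := log_one_add_lt_cubic (x := -u) (by linarith) (neg_ne_zero.mpr hu0)
    rw [show (1:ℝ) + -u = 1 - u by ring] at this
    nlinarith [this]
  have hlogθ : Real.log θ = Real.log (1 + u) - Real.log 2 := by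
    rw [show θ = (1 + u)/2 by rw [hu]; ring, Real.log_div (by linarith) (by norm_num)]
  have hlog1θ : Real.log (1 - θ) = Real.log (1 - u) - Real.log 2 := by
    rw [show (1:ℝ) - θ = (1 - u)/2 by rw [hu]; ring, Real.log_div (by linarith) (by norm_num)]
  have hθpos : (0:ℝ) < θ := by linarith
  have h1θpos : (0:ℝ) < 1 - θ := by linarith
  have hbe : binEnt θ > Real.log 2 - θ * (u - u ^ 2 / 2 + u ^ 3 / 3)
      - (1 - θ) * (-u - u ^ 2 / 2 - u ^ 3 / 3) := by
    simp only [binEnt, hlogθ, hlog1θ]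
    nlinarith [mul_lt_mul_of_pos_left hc1 hθpos, mul_lt_mul_of_pos_left hc2 h1θpos]
  have hL : (0.6931471803:ℝ) < Real.log 2 := Real.log_two_gt_d9
  have husq : u ^ 2 ≤ 4/9 := by
    rw [hu]; nlinarith
  have hθu : θ = (1 + u)/2 := by rw [hu]; ring
  nlinarith [hbe, mul_le_mul_of_nonneg_left husq (sq_nonneg u),
    mul_nonneg (sq_nonneg u) (show (0:ℝ) ≤ Real.log 2 - 1/2 - u^2/3 by nlinarith), sq_nonneg u]

lemma pointwise_lt {θ : ℝ} (h0 : 0 < θ) (h1 : θ < 1) (hne : θ ≠ 1/2) :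
    4 * Real.log 2 * (θ * (1 - θ)) < binEnt θ := by
  rcases le_or_gt θ (1/6) with h | h
  · exact regionA h0 h
  rcases le_or_gt θ (5/6) with h' | h'
  · exact regionB h.le h' hne
  · have := regionA (θ := 1 - θ) (by linarith) (by linarith)
    rw [binEnt_symm] at this
    nlinarith [this]

lemma pointwise_le {θ : ℝ} (h : θ ∈ Set.Icc (0:ℝ) 1) :
    4 * Real.log 2 * (θ * (1 - θ)) ≤ binEnt θ := by
  obtain ⟨h0, h1⟩ := h
  rcases eq_or_lt_of_le h0 with rfl | h0'
  · simp [binEnt_zero]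
  rcases eq_or_lt_of_le h1 with rfl | h1'
  · simp [binEnt_one]
  rcases eq_or_ne θ (1/2) with rfl | hne
  · rw [binEnt_half]; nlinarith [Real.log_pos (by norm_num : (1:ℝ) < 2)]
  · exact (pointwise_lt h0' h1' hne).le


lemma binEnt_continuous : Continuous binEnt := by
  have h := Real.continuous_mul_log
  have : binEnt = fun θ => -(θ * Real.log θ) - ((1-θ) * Real.log (1-θ)) := by
    funext θ; simp [binEnt]
  rw [this]
  exact (h.neg).sub (h.comp (continuous_const.sub continuous_id))

lemma mul_log_bound {θ : ℝ} (h0 : 0 ≤ θ) (h1 : θ ≤ 1) :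
    0 ≤ -θ * Real.log θ ∧ -θ * Real.log θ ≤ 1 := by
  rcases eq_or_lt_of_le h0 with rfl | hp
  · simp
  constructor
  · have := Real.log_nonpos h0 h1
    nlinarith
  · have hinv : Real.log θ⁻¹ ≤ θ⁻¹ - 1 := Real.log_le_sub_one_of_pos (by positivity)
    rw [Real.log_inv] at hinv
    have hmi : θ * θ⁻¹ = 1 := mul_inv_cancel₀ hp.ne'
    nlinarith

lemma binEnt_abs_le {θ : ℝ} (h : θ ∈ Set.Icc (0:ℝ) 1) : ‖binEnt θ‖ ≤ 2 := by
  obtain ⟨h0, h1⟩ := h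
  obtain ⟨a1, a2⟩ := mul_log_bound h0 h1
  obtain ⟨b1, b2⟩ := mul_log_bound (θ := 1 - θ) (by linarith) (by linarith)
  rw [Real.norm_eq_abs, abs_le]
  have : binEnt θ = (-θ * Real.log θ) + (-(1-θ) * Real.log (1-θ)) := by
    simp [binEnt]; ring
  constructor <;> nlinarith [this]

lemma integrable_smul_dirac {f : ℝ → ℝ} (hf : StronglyMeasurable f) (c : ℝ≥0∞)
    (hc : c ≠ ∞) (x : ℝ) : Integrable f (c • Measure.dirac x) := by
  refine ⟨hf.aestronglyMeasurable, ?_⟩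
  simp only [HasFiniteIntegral, lintegral_smul_measure, lintegral_dirac]
  exact ENNReal.mul_lt_top hc.lt_top ENNReal.coe_lt_top

lemma integral_three (a b c : ℝ≥0∞) (ha : a ≠ ∞) (hb : b ≠ ∞) (hc : c ≠ ∞)
    (x y z : ℝ) (f : ℝ → ℝ) (hf : StronglyMeasurable f) :
    ∫ θ, f θ ∂(a • Measure.dirac x + b • Measure.dirac y + c • Measure.dirac z)
      = a.toReal * f x + b.toReal * f y + c.toReal * f z := by
  have i1 := integrable_smul_dirac hf a ha x
  have i2 := integrable_smul_dirac hf b hb y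
  have i3 := integrable_smul_dirac hf c hc z
  rw [integral_add_measure (i1.add_measure i2) i3, integral_add_measure i1 i2,
    integral_smul_measure, integral_smul_measure, integral_smul_measure,
    integral_dirac, integral_dirac, integral_dirac]
  simp [smul_eq_mul]

lemma measure_concentrated (μ : Measure ℝ) {x y z : ℝ} (hxy : x ≠ y) (hxz : x ≠ z)
    (hyz : y ≠ z) (h : μ ({x, y, z} : Set ℝ)ᶜ = 0) :
    μ = μ {x} • Measure.dirac x + μ {y} • Measure.dirac y + μ {z} • Measure.dirac z := by
  classical
  ext s hs
  have key : ∀ (w : ℝ), μ (s ∩ {w}) = if w ∈ s then μ {w} else 0 := by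
    intro w
    by_cases hw : w ∈ s
    · rw [Set.inter_eq_self_of_subset_right (Set.singleton_subset_iff.mpr hw), if_pos hw]
    · rw [Set.inter_singleton_eq_empty.mpr hw, measure_empty, if_neg hw]
  have hT : MeasurableSet ({x, y, z} : Set ℝ) := (Set.toFinite ({x,y,z}:Set ℝ)).measurableSet
  have hms : μ s = μ (s ∩ {x, y, z}) := by
    rw [← measure_inter_add_diff s hT,
      measure_mono_null (fun a ha => ha.2 : s \ {x,y,z} ⊆ ({x,y,z}:Set ℝ)ᶜ) h, add_zero]
  have hsplit : s ∩ ({x, y, z} : Set ℝ) = (s ∩ {x}) ∪ ((s ∩ {y}) ∪ (s ∩ {z})) := by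
    rw [show ({x, y, z} : Set ℝ) = {x} ∪ ({y} ∪ {z}) by
      rw [Set.insert_eq, Set.insert_eq]]
    rw [Set.inter_union_distrib_left, Set.inter_union_distrib_left]
  have hdxy : Disjoint (s ∩ {x}) (s ∩ {y}) :=
    (Set.disjoint_singleton.mpr hxy).mono Set.inter_subset_right Set.inter_subset_right
  have hdxz : Disjoint (s ∩ {x}) (s ∩ {z}) :=
    (Set.disjoint_singleton.mpr hxz).mono Set.inter_subset_right Set.inter_subset_right
  have hdyz : Disjoint (s ∩ {y}) (s ∩ {z}) :=
    (Set.disjoint_singleton.mpr hyz).mono Set.inter_subset_right Set.inter_subset_right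
  have hmy : MeasurableSet (s ∩ {y}) := hs.inter (measurableSet_singleton _)
  have hmz : MeasurableSet (s ∩ {z}) := hs.inter (measurableSet_singleton _)
  have hdec : μ s = μ (s ∩ {x}) + (μ (s ∩ {y}) + μ (s ∩ {z})) := by
    rw [hms, hsplit, measure_union (hdxy.union_right hdxz) (hmy.union hmz),
      measure_union hdyz hmz]
  rw [hdec, key x, key y, key z]
  simp only [Measure.coe_add, Measure.smul_apply, Pi.add_apply, smul_eq_mul,
    Measure.dirac_apply' _ hs, Set.indicator_apply, Set.mem_setOf_eq]
  by_cases hx : x ∈ s <;> by_cases hy : y ∈ s <;> by_cases hz : z ∈ s <;>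
    simp [hx, hy, hz] <;> ring


/-- The latent information prior: `π_LI = (3/10)·δ₀ + (3/10)·δ₁ + (2/5)·δ_{1/2}`. -/
noncomputable def piLI : Measure ℝ :=
  (3 / 10 : ℝ≥0∞) • Measure.dirac (0 : ℝ) + (3 / 10 : ℝ≥0∞) • Measure.dirac (1 : ℝ) +
    (2 / 5 : ℝ≥0∞) • Measure.dirac ((1 : ℝ) / 2)

lemma ennreal_div_ne_top (n m : ℝ≥0∞) (hn : n ≠ ⊤) (hm : m ≠ 0) : n / m ≠ ⊤ := by
  simp [ENNReal.div_eq_top, hn, hm]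

/-- Among Borel probability measures `π` on `[0,1]` with `∫θdπ = 1/2` and `∫θ²dπ = 2/5`,
the integral `∫ S dπ` attains its minimum `(2/5)·log 2` uniquely at `π_LI`. -/
theorem latent_information_prior_unique_minimizer (π : Measure ℝ) [IsProbabilityMeasure π]
    (hsupp : π (Set.Icc (0 : ℝ) 1)ᶜ = 0)
    (hm1 : (∫ θ, θ ∂π) = 1 / 2) (hm2 : (∫ θ, θ ^ 2 ∂π) = 2 / 5) :
    (2 / 5) * Real.log 2 ≤ ∫ θ, binEnt θ ∂π ∧
    ((∫ θ, binEnt θ ∂π) = (2 / 5) * Real.log 2 ↔ π = piLI) := by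
  set L := Real.log 2 with hL
  have h_ae : ∀ᵐ θ ∂π, θ ∈ Set.Icc (0:ℝ) 1 := by
    rw [ae_iff]
    convert hsupp using 2
    rfl
  have hmb : StronglyMeasurable binEnt := binEnt_continuous.stronglyMeasurable
  have hb_int : Integrable binEnt π :=
    Integrable.mono' (integrable_const 2) hmb.aestronglyMeasurable
      (h_ae.mono fun θ h => binEnt_abs_le h)
  have h1_int : Integrable (fun θ : ℝ => θ) π :=
    Integrable.mono' (integrable_const 1) stronglyMeasurable_id.aestronglyMeasurable
      (h_ae.mono fun θ h => by
        rw [Real.norm_eq_abs, abs_le]; exact ⟨by linarith [h.1], h.2⟩)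
  have h2_int : Integrable (fun θ : ℝ => θ ^ 2) π :=
    Integrable.mono' (integrable_const 1)
      (continuous_id.pow 2).stronglyMeasurable.aestronglyMeasurable
      (h_ae.mono fun θ h => by
        rw [Real.norm_eq_abs, abs_le]
        constructor <;> nlinarith [h.1, h.2])
  have hφeq : (fun θ : ℝ => 4 * L * (θ * (1 - θ))) =
      fun θ : ℝ => (4 * L) * θ - (4 * L) * θ ^ 2 := by
    funext θ; ring
  have hφ_int : Integrable (fun θ : ℝ => 4 * L * (θ * (1 - θ))) π := by
    rw [hφeq]; exact (h1_int.const_mul _).sub (h2_int.const_mul _)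
  have hφ_val : ∫ θ, 4 * L * (θ * (1 - θ)) ∂π = 2 / 5 * L := by
    rw [hφeq, integral_sub (h1_int.const_mul _) (h2_int.const_mul _),
      integral_const_mul, integral_const_mul, hm1, hm2]
    ring
  have hineq : 2 / 5 * L ≤ ∫ θ, binEnt θ ∂π := by
    rw [← hφ_val]
    exact integral_mono_ae hφ_int hb_int (h_ae.mono fun θ h => pointwise_le h)
  refine ⟨hineq, ?_, ?_⟩
  · -- equality implies π = piLI
    intro heq
    have hzero : ∫ θ, (binEnt θ - 4 * L * (θ * (1 - θ))) ∂π = 0 := by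
      rw [integral_sub hb_int hφ_int, heq, hφ_val]
      ring
    have hae0 : (fun θ => binEnt θ - 4 * L * (θ * (1 - θ))) =ᵐ[π] 0 :=
      (integral_eq_zero_iff_of_nonneg_ae
        (h_ae.mono fun θ h => sub_nonneg.mpr (pointwise_le h))
        (hb_int.sub hφ_int)).mp hzero
    have hconc : ∀ᵐ θ ∂π, θ ∈ ({0, 1/2, 1} : Set ℝ) := by
      filter_upwards [h_ae, hae0] with θ h h0
      by_contra hne
      simp only [Set.mem_insert_iff, Set.mem_singleton_iff, not_or] at hne
      obtain ⟨hne0, hne12, hne1⟩ := hne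
      have h0' : 0 < θ := lt_of_le_of_ne h.1 (Ne.symm hne0)
      have h1' : θ < 1 := lt_of_le_of_ne h.2 hne1
      have := pointwise_lt h0' h1' hne12
      simp only [Pi.zero_apply] at h0
      rw [← hL] at this
      linarith
    have hnull : π (({0, 1/2, 1} : Set ℝ))ᶜ = 0 := by
      rw [ae_iff] at hconc
      convert hconc using 2
      rfl
    have hπeq := measure_concentrated π (show (0:ℝ) ≠ 1/2 by norm_num)
      (show (0:ℝ) ≠ 1 by norm_num) (show (1:ℝ)/2 ≠ 1 by norm_num) hnull
    set a := π {(0:ℝ)} with ha'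
    set b := π {(1:ℝ)/2} with hb'
    set c := π {(1:ℝ)} with hc'
    have ha : a ≠ ⊤ := measure_ne_top π _
    have hb : b ≠ ⊤ := measure_ne_top π _
    have hc : c ≠ ⊤ := measure_ne_top π _
    have e0 : a.toReal * 1 + b.toReal * 1 + c.toReal * 1 = 1 := by
      have h1' : ∫ θ, (1:ℝ) ∂π = 1 := by simp
      rw [hπeq, integral_three a b c ha hb hc _ _ _ _ stronglyMeasurable_const] at h1'
      exact h1'
    have e1 : a.toReal * 0 + b.toReal * (1/2) + c.toReal * 1 = 1/2 := by
      rw [hπeq, integral_three a b c ha hb hc 0 (1/2) 1 (fun θ => θ) stronglyMeasurable_id] at hm1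
      exact hm1
    have e2 : a.toReal * 0 ^ 2 + b.toReal * (1/2 : ℝ) ^ 2 + c.toReal * 1 ^ 2 = 2/5 := by
      rw [hπeq, integral_three a b c ha hb hc 0 (1/2) 1 (fun θ => θ ^ 2)
        (continuous_id.pow 2).stronglyMeasurable] at hm2
      exact hm2
    have hbv : b.toReal = 2/5 := by nlinarith [e0, e1, e2]
    have hcv : c.toReal = 3/10 := by nlinarith [e0, e1, e2]
    have hav : a.toReal = 3/10 := by nlinarith [e0, e1, e2]
    have h310 : ((3:ℝ≥0∞)/10).toReal = 3/10 := by
      rw [ENNReal.toReal_div]; norm_num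
    have h25 : ((2:ℝ≥0∞)/5).toReal = 2/5 := by
      rw [ENNReal.toReal_div]; norm_num
    have hA : a = 3/10 := by
      rw [← ENNReal.toReal_eq_toReal_iff' ha (ennreal_div_ne_top 3 10 (by norm_num) (by norm_num)),
        hav, h310]
    have hB : b = 2/5 := by
      rw [← ENNReal.toReal_eq_toReal_iff' hb (ennreal_div_ne_top 2 5 (by norm_num) (by norm_num)),
        hbv, h25]
    have hC : c = 3/10 := by
      rw [← ENNReal.toReal_eq_toReal_iff' hc (ennreal_div_ne_top 3 10 (by norm_num) (by norm_num)),
        hcv, h310]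
    rw [hπeq, hA, hB, hC, piLI]
    abel
  · -- π = piLI implies equality
    intro hπ
    rw [hπ, piLI, integral_three _ _ _ (ennreal_div_ne_top 3 10 (by norm_num) (by norm_num))
      (ennreal_div_ne_top 3 10 (by norm_num) (by norm_num))
      (ennreal_div_ne_top 2 5 (by norm_num) (by norm_num)) _ _ _ _ hmb,
      binEnt_zero, binEnt_one, binEnt_half]
    rw [ENNReal.toReal_div, ENNReal.toReal_div]
    norm_num
    exact hL.symm
end

section
/- The function g(θ) = S(θ) + 3θ² − 3θ − 1/25 has exactly four distinct zeros in the open interval (0,1), and these zeros are symmetric about θ = 1/2 (i.e. g(θ) = 0 implies g(1−θ) = 0). -/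
noncomputable def gf (θ : ℝ) : ℝ := binEnt θ + 3 * θ ^ 2 - 3 * θ - 1 / 25

noncomputable def gd (θ : ℝ) : ℝ := Real.log (1 - θ) - Real.log θ + 6 * θ - 3

lemma gf_symm (θ : ℝ) : gf (1 - θ) = gf θ := by
  simp only [gf, binEnt]
  ring_nf

lemma mul_log_hasDeriv {x : ℝ} (hx : x ≠ 0) :
    HasDerivAt (fun y : ℝ => y * Real.log y) (Real.log x + 1) x := by
  have := (hasDerivAt_id x).mul (Real.hasDerivAt_log hx)
  refine this.congr_deriv ?_
  field_simp
  simp; ring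

lemma gf_hasDeriv {θ : ℝ} (h0 : 0 < θ) (h1 : θ < 1) : HasDerivAt gf (gd θ) θ := by
  have h1' : (0:ℝ) < 1 - θ := by linarith
  have hA := mul_log_hasDeriv h0.ne'
  have hinner : HasDerivAt (fun x : ℝ => 1 - x) (-1) θ := by
    simpa using (hasDerivAt_id θ).const_sub 1
  have hB : HasDerivAt (fun x : ℝ => (1 - x) * Real.log (1 - x))
      (-(Real.log (1 - θ) + 1)) θ := by
    have := (mul_log_hasDeriv h1'.ne').comp θ hinner
    refine this.congr_deriv ?_
    ring
  have hP : HasDerivAt (fun x : ℝ => 3 * x ^ 2 - 3 * x - 1 / 25) (6 * θ - 3) θ := by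
    have := (((hasDerivAt_pow 2 θ).const_mul 3).sub ((hasDerivAt_id θ).const_mul 3)).sub_const
      (1 / 25)
    refine this.congr_deriv ?_
    push_cast
    ring
  have heq : gf = fun x : ℝ =>
      -(x * Real.log x) - (1 - x) * Real.log (1 - x) + (3 * x ^ 2 - 3 * x - 1 / 25) := by
    funext x
    simp only [gf, binEnt]
    ring
  rw [heq]
  have := (hA.neg.sub hB).add hP
  refine this.congr_deriv ?_
  simp only [gd]
  ring

lemma gd_hasDeriv {θ : ℝ} (h0 : 0 < θ) (h1 : θ < 1) :
    HasDerivAt gd (6 - (1 - θ)⁻¹ - θ⁻¹) θ := by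
  have h1' : (0:ℝ) < 1 - θ := by linarith
  have hinner : HasDerivAt (fun x : ℝ => 1 - x) (-1) θ := by
    simpa using (hasDerivAt_id θ).const_sub 1
  have hL1 : HasDerivAt (fun x : ℝ => Real.log (1 - x)) (-(1 - θ)⁻¹) θ := by
    have := (Real.hasDerivAt_log h1'.ne').comp θ hinner
    refine this.congr_deriv ?_
    ring
  have := ((hL1.sub (Real.hasDerivAt_log h0.ne')).add ((hasDerivAt_id θ).const_mul 6)).sub_const 3
  have heq : gd = fun x : ℝ => (Real.log (1 - x) - Real.log x + 6 * x) - 3 := by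
    funext x; simp only [gd]
  rw [heq]
  refine this.congr_deriv ?_
  ring_nf

lemma gf_contOn {s : Set ℝ} (hs : s ⊆ Set.Ioo 0 1) : ContinuousOn gf s := fun x hx =>
  ((gf_hasDeriv (hs hx).1 (hs hx).2).continuousAt).continuousWithinAt

lemma deriv_gf {θ : ℝ} (h : θ ∈ Set.Ioo (0:ℝ) 1) : deriv gf θ = gd θ :=
  (gf_hasDeriv h.1 h.2).deriv

lemma deriv2_gf {θ : ℝ} (h : θ ∈ Set.Ioo (0:ℝ) 1) :
    deriv (deriv gf) θ = 6 - (1 - θ)⁻¹ - θ⁻¹ := by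
  have hev : deriv gf =ᶠ[nhds θ] gd :=
    Filter.eventuallyEq_of_mem (isOpen_Ioo.mem_nhds h) fun y hy => deriv_gf hy
  rw [hev.deriv_eq]
  exact (gd_hasDeriv h.1 h.2).deriv



lemma log_ge' {x : ℝ} (hx : 0 < x) : 1 - 1/x ≤ Real.log x := by
  have h := Real.log_le_sub_one_of_pos (inv_pos.2 hx)
  rw [Real.log_inv, one_div] at *
  linarith

lemma log100_le : Real.log 100 ≤ 4.6332804 := by
  rw [show (100:ℝ) = 2^7 * (25/32) by norm_num,
    Real.log_mul (by norm_num) (by norm_num), Real.log_pow]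
  have h2 := Real.log_two_lt_d9
  have h3 := Real.log_le_sub_one_of_pos (show (0:ℝ) < 25/32 by norm_num)
  push_cast
  nlinarith

lemma log20_ge : 2.9725887 ≤ Real.log 20 := by
  rw [show (20:ℝ) = 2^4 * (5/4) by norm_num,
    Real.log_mul (by norm_num) (by norm_num), Real.log_pow]
  have h2 := Real.log_two_gt_d9
  have h3 := log_ge' (show (0:ℝ) < 5/4 by norm_num)
  push_cast
  nlinarith

lemma log54_le : Real.log (5/4) ≤ 17/72 := by
  rw [show (5:ℝ)/4 = (10/9) * (9/8) by norm_num,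
    Real.log_mul (by norm_num) (by norm_num)]
  have h1 := Real.log_le_sub_one_of_pos (show (0:ℝ) < 10/9 by norm_num)
  have h2 := Real.log_le_sub_one_of_pos (show (0:ℝ) < 9/8 by norm_num)
  linarith

lemma log5_le : Real.log 5 ≤ 1.6224056 := by
  rw [show (5:ℝ) = 2^2 * (5/4) by norm_num,
    Real.log_mul (by norm_num) (by norm_num), Real.log_pow]
  have h2 := Real.log_two_lt_d9
  have h3 := log54_le
  push_cast
  nlinarith

lemma logA_le : Real.log (100/21) ≤ 1.5708182 := by
  rw [show (100:ℝ)/21 = 2^2 * ((25/24) * (8/7)) by norm_num,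
    Real.log_mul (by norm_num) (by norm_num), Real.log_pow,
    Real.log_mul (by norm_num) (by norm_num)]
  have h2 := Real.log_two_lt_d9
  have h3 := Real.log_le_sub_one_of_pos (show (0:ℝ) < 25/24 by norm_num)
  have h4 := Real.log_le_sub_one_of_pos (show (0:ℝ) < 8/7 by norm_num)
  push_cast
  nlinarith

lemma logB_le : Real.log (100/79) ≤ 0.2487694 := by
  rw [show (100:ℝ)/79 = (5/4) * (80/79) by norm_num,
    Real.log_mul (by norm_num) (by norm_num)]
  have h3 := log54_le
  have h4 := Real.log_le_sub_one_of_pos (show (0:ℝ) < 80/79 by norm_num)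
  linarith

lemma log7921_le : Real.log (79/21) ≤ 1.3267706 := by
  rw [show (79:ℝ)/21 = 2^2 * (79/84) by norm_num,
    Real.log_mul (by norm_num) (by norm_num), Real.log_pow]
  have h2 := Real.log_two_lt_d9
  have h3 := Real.log_le_sub_one_of_pos (show (0:ℝ) < 79/84 by norm_num)
  push_cast
  nlinarith

lemma gv1 : gf (1/100) < 0 := by
  have h1 : Real.log (1/100 : ℝ) = -Real.log 100 := by
    rw [show (1:ℝ)/100 = (100:ℝ)⁻¹ by norm_num, Real.log_inv]
  have h2 := log_ge' (show (0:ℝ) < 99/100 by norm_num)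
  have h3 := log100_le
  simp only [gf, binEnt, show (1:ℝ) - 1/100 = 99/100 by norm_num, h1]
  norm_num at h2 ⊢
  nlinarith

lemma gv2 : 0 < gf (1/20) := by
  have h1 : Real.log (1/20 : ℝ) = -Real.log 20 := by
    rw [show (1:ℝ)/20 = (20:ℝ)⁻¹ by norm_num, Real.log_inv]
  have h2 := Real.log_le_sub_one_of_pos (show (0:ℝ) < 19/20 by norm_num)
  have h3 := log20_ge
  simp only [gf, binEnt, show (1:ℝ) - 1/20 = 19/20 by norm_num, h1]
  norm_num at h2 ⊢
  nlinarith

lemma gv3 : gf (1/5) < 0 := by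
  have h1 : Real.log (1/5 : ℝ) = -Real.log 5 := by
    rw [show (1:ℝ)/5 = (5:ℝ)⁻¹ by norm_num, Real.log_inv]
  have h2 : Real.log (4/5 : ℝ) = -Real.log (5/4) := by
    rw [show (4:ℝ)/5 = ((5:ℝ)/4)⁻¹ by norm_num, Real.log_inv]
  have h3 := log5_le
  have h4 := log54_le
  have h5 := log_ge' (show (0:ℝ) < 5/4 by norm_num)
  simp only [gf, binEnt, show (1:ℝ) - 1/5 = 4/5 by norm_num, h1, h2]
  norm_num at h5 ⊢
  nlinarith

lemma gv4 : gf (21/100) < 0 := by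
  have h1 : Real.log (21/100 : ℝ) = -Real.log (100/21) := by
    rw [show (21:ℝ)/100 = ((100:ℝ)/21)⁻¹ by norm_num, Real.log_inv]
  have h2 : Real.log (79/100 : ℝ) = -Real.log (100/79) := by
    rw [show (79:ℝ)/100 = ((100:ℝ)/79)⁻¹ by norm_num, Real.log_inv]
  have h3 := logA_le
  have h4 := logB_le
  have h5 : (0:ℝ) ≤ Real.log (100/21) := Real.log_nonneg (by norm_num)
  have h6 : (0:ℝ) ≤ Real.log (100/79) := Real.log_nonneg (by norm_num)
  simp only [gf, binEnt, show (1:ℝ) - 21/100 = 79/100 by norm_num, h1, h2]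
  norm_num
  nlinarith

lemma gd_neg {θ : ℝ} (h1 : 21/100 ≤ θ) (h2 : θ ≤ 2115/10000) : gd θ < 0 := by
  have hl1 : Real.log (1-θ) ≤ Real.log (79/100) :=
    Real.log_le_log (by linarith) (by linarith)
  have hl2 : Real.log (21/100) ≤ Real.log θ :=
    Real.log_le_log (by norm_num) h1
  have h79 := Real.log_le_sub_one_of_pos (show (0:ℝ) < 79/100 by norm_num)
  have h21 : Real.log (21/100 : ℝ) = -Real.log (100/21) := by
    rw [show (21:ℝ)/100 = ((100:ℝ)/21)⁻¹ by norm_num, Real.log_inv]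
  have h3 := logA_le
  simp only [gd]
  rw [h21] at hl2
  linarith




lemma concave_left : StrictConcaveOn ℝ (Set.Ioo (0:ℝ) (21/100)) gf := by
  have hsub : Set.Ioo (0:ℝ) (21/100) ⊆ Set.Ioo (0:ℝ) 1 := fun x hx =>
    ⟨hx.1, by linarith [hx.2]⟩
  apply strictConcaveOn_of_deriv2_neg (convex_Ioo _ _) (gf_contOn hsub)
  intro x hx
  rw [interior_Ioo] at hx
  have hx' : x ∈ Set.Ioo (0:ℝ) 1 := hsub hx
  have h2 : deriv^[2] gf = deriv (deriv gf) := rfl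
  rw [h2, deriv2_gf hx']
  have hx0 : 0 < x := hx.1
  have hx1 : 0 < 1 - x := by linarith [hx'.2]
  have key : x * (1 - x) < 1/6 := by nlinarith [hx.2]
  have e : (1 - x)⁻¹ + x⁻¹ = 1 / (x * (1 - x)) := by field_simp; ring
  have h6 : 6 < 1 / (x * (1 - x)) := by
    rw [lt_div_iff₀ (by positivity)]; linarith
  rw [← e] at h6
  linarith

lemma convex_mid : ConvexOn ℝ (Set.Icc (2115/10000:ℝ) (7885/10000)) gf := by
  have hsub : Set.Icc (2115/10000:ℝ) (7885/10000) ⊆ Set.Ioo (0:ℝ) 1 := fun x hx =>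
    ⟨by linarith [hx.1], by linarith [hx.2]⟩
  apply convexOn_of_hasDerivWithinAt2_nonneg (convex_Icc _ _) (gf_contOn hsub)
    (f' := gd) (f'' := fun θ => 6 - (1 - θ)⁻¹ - θ⁻¹)
  · intro x hx
    rw [interior_Icc] at hx
    exact (gf_hasDeriv (by linarith [hx.1]) (by linarith [hx.2])).hasDerivWithinAt
  · intro x hx
    rw [interior_Icc] at hx
    exact (gd_hasDeriv (by linarith [hx.1]) (by linarith [hx.2])).hasDerivWithinAt
  · intro x hx
    rw [interior_Icc] at hx
    have hx0 : 0 < x := by linarith [hx.1]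
    have hx1 : 0 < 1 - x := by linarith [hx.2]
    have key : 1/6 ≤ x * (1 - x) := by nlinarith [hx.1, hx.2]
    have e : (1 - x)⁻¹ + x⁻¹ = 1 / (x * (1 - x)) := by field_simp; ring
    have h6 : 1 / (x * (1 - x)) ≤ 6 := by
      rw [div_le_iff₀ (by positivity)]; linarith
    rw [← e] at h6
    show (0:ℝ) ≤ 6 - (1 - x)⁻¹ - x⁻¹
    linarith

lemma anti_mid : AntitoneOn gf (Set.Icc (21/100:ℝ) (2115/10000)) := by
  have hsub : Set.Icc (21/100:ℝ) (2115/10000) ⊆ Set.Ioo (0:ℝ) 1 := fun x hx =>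
    ⟨by linarith [hx.1], by linarith [hx.2]⟩
  apply antitoneOn_of_deriv_nonpos (convex_Icc _ _) (gf_contOn hsub)
  · intro x hx
    rw [interior_Icc] at hx
    exact (gf_hasDeriv (by linarith [hx.1]) (by linarith [hx.2])).differentiableAt.differentiableWithinAt
  · intro x hx
    rw [interior_Icc] at hx
    rw [deriv_gf ⟨by linarith [hx.1], by linarith [hx.2]⟩]
    exact (gd_neg hx.1.le hx.2.le).le

lemma mid_neg : ∀ θ ∈ Set.Icc (21/100:ℝ) (79/100), gf θ < 0 := by
  have hA : gf (2115/10000) < 0 :=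
    lt_of_le_of_lt (anti_mid ⟨le_refl _, by norm_num⟩ ⟨by norm_num, le_refl _⟩ (by norm_num)) gv4
  intro θ hθ
  rcases le_or_gt θ (2115/10000) with h | h
  · exact lt_of_le_of_lt (anti_mid ⟨le_refl _, by norm_num⟩ ⟨hθ.1, h⟩ hθ.1) gv4
  rcases le_or_gt (7885/10000) θ with h2 | h2
  · rw [← gf_symm θ]
    exact lt_of_le_of_lt
      (anti_mid ⟨le_refl _, by norm_num⟩ ⟨by linarith [hθ.2], by linarith⟩ (by linarith [hθ.2]))
      gv4
  · have hmax := convex_mid.le_on_segment (x := (2115/10000:ℝ)) (y := (7885/10000:ℝ))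
      ⟨le_refl _, by norm_num⟩ ⟨by norm_num, le_refl _⟩
      (z := θ) (by rw [segment_eq_Icc (by norm_num)]; exact ⟨h.le, h2.le⟩)
    have hBe : gf (7885/10000 : ℝ) = gf (2115/10000) := by
      rw [show (7885/10000:ℝ) = 1 - 2115/10000 by norm_num]
      exact gf_symm _
    rw [hBe, max_self] at hmax
    exact lt_of_le_of_lt hmax hA

lemma no_three {a b c : ℝ} (ha : a ∈ Set.Ioo (0:ℝ) (21/100)) (hb : b ∈ Set.Ioo (0:ℝ) (21/100))
    (hc : c ∈ Set.Ioo (0:ℝ) (21/100)) (hab : a < b) (hbc : b < c)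
    (fa : gf a = 0) (fb : gf b = 0) (fc : gf c = 0) : False := by
  have hac : a < c := hab.trans hbc
  have ht : 0 < (c - b)/(c - a) := div_pos (by linarith) (by linarith)
  have hs : 0 < (b - a)/(c - a) := div_pos (by linarith) (by linarith)
  have hca : c - a ≠ 0 := by linarith
  have hts : (c - b)/(c - a) + (b - a)/(c - a) = 1 := by
    rw [← add_div]
    field_simp
    ring
  have hcomb : ((c - b)/(c - a)) * a + ((b - a)/(c - a)) * c = b := by
    rw [div_mul_eq_mul_div, div_mul_eq_mul_div, ← add_div, div_eq_iff hca]
    ring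
  have hk := concave_left.2 ha hc (ne_of_lt hac) ht hs hts
  rw [smul_eq_mul, smul_eq_mul, smul_eq_mul, smul_eq_mul, hcomb, fa, fb, fc] at hk
  norm_num at hk

/-- The function `g(θ) = S(θ) + 3θ² − 3θ − 1/25` has exactly four distinct zeros in `(0,1)`,
and the zero set is symmetric about `θ = 1/2`. -/
theorem four_zeros :
    (∃ s : Finset ℝ,
      s.card = 4 ∧
      ∀ θ : ℝ, θ ∈ s ↔ (θ ∈ Set.Ioo (0 : ℝ) 1 ∧
        binEnt θ + 3 * θ ^ 2 - 3 * θ - 1 / 25 = 0)) ∧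
    ∀ θ ∈ Set.Ioo (0 : ℝ) 1,
      binEnt θ + 3 * θ ^ 2 - 3 * θ - 1 / 25 = 0 →
      binEnt (1 - θ) + 3 * (1 - θ) ^ 2 - 3 * (1 - θ) - 1 / 25 = 0 := by
  constructor
  · have cont1 : ContinuousOn gf (Set.Icc (1/100:ℝ) (1/20)) :=
      gf_contOn (fun x hx => ⟨by linarith [hx.1], by linarith [hx.2]⟩)
    have cont2 : ContinuousOn gf (Set.Icc (1/20:ℝ) (1/5)) :=
      gf_contOn (fun x hx => ⟨by linarith [hx.1], by linarith [hx.2]⟩)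
    obtain ⟨z1, hz1m, hz1⟩ :=
      intermediate_value_Ioo (by norm_num : (1/100:ℝ) ≤ 1/20) cont1 ⟨gv1, gv2⟩
    obtain ⟨z2, hz2m, hz2⟩ :=
      intermediate_value_Ioo' (by norm_num : (1/20:ℝ) ≤ 1/5) cont2 ⟨gv3, gv2⟩
    have hz1' : z1 ∈ Set.Ioo (0:ℝ) (21/100) :=
      ⟨by linarith [hz1m.1], by linarith [hz1m.2]⟩
    have hz2' : z2 ∈ Set.Ioo (0:ℝ) (21/100) :=
      ⟨by linarith [hz2m.1], by linarith [hz2m.2]⟩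
    have ha1 : 1/100 < z1 := hz1m.1
    have ha2 : z1 < 1/20 := hz1m.2
    have hb1 : 1/20 < z2 := hz2m.1
    have hb2 : z2 < 1/5 := hz2m.2
    have h12 : z1 < z2 := by linarith
    have uniq : ∀ θ ∈ Set.Ioo (0:ℝ) (21/100), gf θ = 0 → θ = z1 ∨ θ = z2 := by
      intro θ hθ h0
      by_contra hcon
      push_neg at hcon
      obtain ⟨hne1, hne2⟩ := hcon
      rcases lt_trichotomy θ z1 with h | h | h
      · exact no_three hθ hz1' hz2' h h12 h0 hz1 hz2
      · exact hne1 h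
      rcases lt_trichotomy θ z2 with h' | h' | h'
      · exact no_three hz1' hθ hz2' h h' hz1 h0 hz2
      · exact hne2 h'
      · exact no_three hz1' hz2' hθ h12 h' hz1 hz2 h0
    refine ⟨{z1, z2, 1 - z2, 1 - z1}, ?_, ?_⟩
    · rw [Finset.card_insert_of_notMem (by
          simp only [Finset.mem_insert, Finset.mem_singleton]
          push_neg
          refine ⟨by linarith, by linarith [hz2m.2], by linarith⟩),
        Finset.card_insert_of_notMem (by
          simp only [Finset.mem_insert, Finset.mem_singleton]
          push_neg
          refine ⟨by linarith [hz2m.2], by linarith⟩),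
        Finset.card_insert_of_notMem (by
          simp only [Finset.mem_singleton]
          intro hcon
          have : z1 = z2 := by linarith
          exact absurd this h12.ne),
        Finset.card_singleton]
    · intro θ
      simp only [Finset.mem_insert, Finset.mem_singleton]
      constructor
      · rintro (rfl | rfl | rfl | rfl)
        · exact ⟨⟨by linarith [hz1m.1], by linarith [hz1m.2]⟩, hz1⟩
        · exact ⟨⟨by linarith [hz2m.1], by linarith [hz2m.2]⟩, hz2⟩
        · exact ⟨⟨by linarith [hz2m.2], by linarith [hz2m.1]⟩, (gf_symm z2).trans hz2⟩
        · exact ⟨⟨by linarith [hz1m.2], by linarith [hz1m.1]⟩, (gf_symm z1).trans hz1⟩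
      · rintro ⟨hmem, h0⟩
        have h0' : gf θ = 0 := h0
        rcases lt_or_ge θ (21/100) with h | h
        · rcases uniq θ ⟨hmem.1, h⟩ h0' with h' | h'
          · exact Or.inl h'
          · exact Or.inr (Or.inl h')
        rcases le_or_gt θ (79/100) with h2 | h2
        · exact absurd h0' (ne_of_lt (mid_neg θ ⟨h, h2⟩))
        · have hsym : gf (1 - θ) = 0 := (gf_symm θ).trans h0'
          have hmem' : 1 - θ ∈ Set.Ioo (0:ℝ) (21/100) := ⟨by linarith [hmem.2], by linarith⟩
          rcases uniq _ hmem' hsym with h' | h'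
          · exact Or.inr (Or.inr (Or.inr (by linarith)))
          · exact Or.inr (Or.inr (Or.inl (by linarith)))
  · intro θ hθ h
    exact (gf_symm θ).trans h
end
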